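/- Let P, Q be probability distributions on ℝ with everywhere positive continuous densities f_X, f_Y and CDFs F_X, F_Y, and let X ∼ P, Y ∼ Q. Let Q_P^{HD} denote the law of W = min{F_Y(X), 1 − F_Y(X)} (whose density on [0,1/2] is f_W(z) = f_X(F_Y⁻¹(z))/f_Y(F_Y⁻¹(z)) + f_X(F_Y⁻¹(1−z))/f_Y(F_Y⁻¹(1−z))), and let U denote the uniform distribution on [0, 1/2] (density 2 on [0,1/2]). Then TVD(Q_P^{HD}, U) ≤ TVD(P, Q), where TVD denotes total variation distance. By symmetry the analogous bound TVD(P_Q^{HD}, U) ≤ TVD(P, Q) also holds, where P_Q^{HD} is the law of min{F_X(Y), 1 − F_X(Y)}. -/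

import Mathlib

open MeasureTheory Set
open scoped ENNReal

/-- The total variation distance between two measures on `ℝ`, computed via their
densities (Radon–Nikodym derivatives) with respect to Lebesgue measure:
`TVD(P,Q) = (1/2) ∫ |p(x) - q(x)| dx`. -/
noncomputable def TVD (μ ν : Measure ℝ) : ℝ :=
  (1 / 2) * ∫ x, |(μ.rnDeriv volume x).toReal - (ν.rnDeriv volume x).toReal|

lemma TVD_symm (μ ν : Measure ℝ) : TVD μ ν = TVD ν μ := by
  unfold TVD; congr 1; exact integral_congr_ae (Filter.Eventually.of_forall fun x => abs_sub_comm _ _)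

-- core inequality
lemma TVD_le_of_forall (α β : Measure ℝ) [IsProbabilityMeasure α] [IsProbabilityMeasure β]
    (hβ : β ≪ volume) {c : ℝ}
    (h : ∀ E : Set ℝ, MeasurableSet E → (α E).toReal - (β E).toReal ≤ c) :
    TVD α β ≤ c := by
  set p : ℝ → ℝ := fun x => (α.rnDeriv volume x).toReal with hp_def
  set q : ℝ → ℝ := fun x => (β.rnDeriv volume x).toReal with hq_def
  have hp_int : Integrable p volume := Measure.integrable_toReal_rnDeriv
  have hq_int : Integrable q volume := Measure.integrable_toReal_rnDeriv
  have hp_meas : Measurable p := (Measure.measurable_rnDeriv _ _).ennreal_toReal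
  have hq_meas : Measurable q := (Measure.measurable_rnDeriv _ _).ennreal_toReal
  set σ : ℝ := (α.singularPart volume univ).toReal with hσ_def
  have hσ0 : 0 ≤ σ := ENNReal.toReal_nonneg
  have hip : ∫ x, p x = 1 - σ := by
    rw [hp_def, Measure.integral_toReal_rnDeriv']
    simp
    rfl
  have hiq : ∫ x, q x = 1 := by
    rw [hq_def, Measure.integral_toReal_rnDeriv hβ]
    simp
  obtain ⟨s, hs, hs1, hs2⟩ := (α.mutuallySingular_singularPart volume)
  -- hs1 : singularPart α volume s = 0, hs2 : volume sᶜ = 0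
  set E : Set ℝ := {x | q x < p x} ∪ sᶜ with hE_def
  have hE : MeasurableSet E := (measurableSet_lt hq_meas hp_meas).union hs.compl
  have hsing_E : α.singularPart volume E = α.singularPart volume univ := by
    apply le_antisymm (measure_mono (subset_univ _))
    calc α.singularPart volume univ = α.singularPart volume s + α.singularPart volume sᶜ := by
          rw [← measure_union (disjoint_compl_right) hs.compl]
          simp
      _ = α.singularPart volume sᶜ := by rw [hs1, zero_add]
      _ ≤ α.singularPart volume E := measure_mono subset_union_right
  have hq_setint : ∫ x in E, q x = (β E).toReal := Measure.setIntegral_toReal_rnDeriv hβ E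
  have hp_setint : ∫ x in E, p x = (α E).toReal - σ := by
    rw [hp_def, Measure.setIntegral_toReal_rnDeriv_eq_withDensity E]
    have hdecomp : α E = α.singularPart volume E + volume.withDensity (α.rnDeriv volume) E := by
      conv_lhs => rw [← α.singularPart_add_rnDeriv volume]
      rfl
    rw [hσ_def, ← hsing_E, eq_sub_iff_add_eq, measureReal_def, ← ENNReal.toReal_add (measure_ne_top _ _) (measure_ne_top _ _)]
    rw [hdecomp, add_comm]
  set f : ℝ → ℝ := fun x => p x - q x with hf_def
  have hf_int : Integrable f volume := hp_int.sub hq_int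
  have hmax_int : Integrable (fun x => max (f x) 0) volume := hf_int.pos_part
  have hmax_ind : ∀ x, Set.indicator {x | q x < p x} f x = max (f x) 0 := by
    intro x
    by_cases hx : q x < p x
    · rw [Set.indicator_of_mem (show x ∈ {x | q x < p x} from hx),
        max_eq_left (le_of_lt (sub_pos.mpr hx))]
    · rw [Set.indicator_of_notMem (show x ∉ {x | q x < p x} from hx),
        max_eq_right (sub_nonpos.mpr (not_lt.mp hx))]
  have hM : ∫ x, max (f x) 0 = ∫ x in E, f x := by
    have h1 : ∫ x, max (f x) 0 = ∫ x, Set.indicator {x | q x < p x} f x :=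
      integral_congr_ae (Filter.Eventually.of_forall fun x => (hmax_ind x).symm)
    have hsc : ∀ᵐ x ∂(volume : Measure ℝ), x ∈ s := by
      rw [ae_iff]
      exact hs2
    have h2 : (fun x => Set.indicator {x | q x < p x} f x) =ᵐ[volume]
        fun x => Set.indicator E f x := by
      filter_upwards [hsc] with x hx
      by_cases hqp : q x < p x
      · rw [Set.indicator_of_mem (show x ∈ {x | q x < p x} from hqp)]
        exact (Set.indicator_of_mem (show x ∈ E from Or.inl hqp) f).symm
      · rw [Set.indicator_of_notMem (show x ∉ {x | q x < p x} from hqp)]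
        refine (Set.indicator_of_notMem ?_ f).symm
        rintro (h | h)
        · exact hqp h
        · exact h hx
    rw [h1, integral_congr_ae h2, integral_indicator hE]
  have hEf : ∫ x in E, f x = ((α E).toReal - σ) - (β E).toReal := by
    rw [hf_def]
    rw [integral_sub hp_int.integrableOn hq_int.integrableOn, hp_setint, hq_setint]
  have hintf : ∫ x, f x = -σ := by
    rw [hf_def, integral_sub hp_int hq_int, hip, hiq]; ring
  have habs : ∀ x, |f x| = 2 * max (f x) 0 - f x := by
    intro x
    rcases le_total 0 (f x) with h | h
    · rw [abs_of_nonneg h, max_eq_left h]; ring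
    · rw [abs_of_nonpos h, max_eq_right h]; ring
  have hiabs : ∫ x, |f x| = 2 * (∫ x, max (f x) 0) - ∫ x, f x := by
    calc ∫ x, |f x| = ∫ x, (2 * max (f x) 0 - f x) :=
          integral_congr_ae (Filter.Eventually.of_forall fun x => habs x)
      _ = (∫ x, 2 * max (f x) 0) - ∫ x, f x := integral_sub (hmax_int.const_mul 2) hf_int
      _ = 2 * (∫ x, max (f x) 0) - ∫ x, f x := by rw [integral_const_mul]
  have hTVD : TVD α β = (1 / 2) * ∫ x, |f x| := rfl
  have hEc := h E hE
  rw [hTVD, hiabs, hintf, hM, hEf]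
  linarith

lemma measure_apply_diff_le (P Q : Measure ℝ) [IsProbabilityMeasure P] [IsProbabilityMeasure Q]
    (hPa : P ≪ volume) (hQa : Q ≪ volume) (B : Set ℝ) :
    (P B).toReal - (Q B).toReal ≤ TVD P Q := by
  set p : ℝ → ℝ := fun x => (P.rnDeriv volume x).toReal with hp_def
  set q : ℝ → ℝ := fun x => (Q.rnDeriv volume x).toReal with hq_def
  have hp_int : Integrable p volume := Measure.integrable_toReal_rnDeriv
  have hq_int : Integrable q volume := Measure.integrable_toReal_rnDeriv
  have hf_int : Integrable (fun x => p x - q x) volume := hp_int.sub hq_int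
  have hmax_int : Integrable (fun x => max (p x - q x) 0) volume := hf_int.pos_part
  have hPB : (P B).toReal = ∫ x in B, p x := (Measure.setIntegral_toReal_rnDeriv hPa B).symm
  have hQB : (Q B).toReal = ∫ x in B, q x := (Measure.setIntegral_toReal_rnDeriv hQa B).symm
  have hip : ∫ x, p x = 1 := by rw [hp_def, Measure.integral_toReal_rnDeriv hPa]; simp
  have hiq : ∫ x, q x = 1 := by rw [hq_def, Measure.integral_toReal_rnDeriv hQa]; simp
  have h1 : (P B).toReal - (Q B).toReal = ∫ x in B, (p x - q x) := by
    rw [hPB, hQB, integral_sub hp_int.integrableOn hq_int.integrableOn]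
  have h2 : ∫ x in B, (p x - q x) ≤ ∫ x in B, max (p x - q x) 0 :=
    integral_mono hf_int.integrableOn hmax_int.integrableOn fun x => le_max_left _ _
  have h3 : ∫ x in B, max (p x - q x) 0 ≤ ∫ x, max (p x - q x) 0 :=
    setIntegral_le_integral hmax_int (Filter.Eventually.of_forall fun x => le_max_right _ _)
  have habs : ∀ x, max (p x - q x) 0 = (|p x - q x| + (p x - q x)) / 2 := by
    intro x
    rcases le_total 0 (p x - q x) with h | h
    · rw [max_eq_left h, abs_of_nonneg h]; ring
    · rw [max_eq_right h, abs_of_nonpos h]; ring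
  have h4 : ∫ x, max (p x - q x) 0 = (1 / 2) * ∫ x, |p x - q x| := by
    calc ∫ x, max (p x - q x) 0 = ∫ x, (|p x - q x| + (p x - q x)) / 2 :=
          integral_congr_ae (Filter.Eventually.of_forall habs)
      _ = ((∫ x, |p x - q x|) + ∫ x, (p x - q x)) / 2 := by
          rw [integral_div, integral_add hf_int.abs hf_int]
      _ = (1 / 2) * ∫ x, |p x - q x| := by
          rw [integral_sub hp_int hq_int, hip, hiq]; ring
  have hTVD : TVD P Q = (1 / 2) * ∫ x, |p x - q x| := rfl
  rw [hTVD, h1, ← h4]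
  exact h2.trans h3

lemma map_min_cdf (Q : Measure ℝ) [IsProbabilityMeasure Q] (fY : ℝ → ℝ)
    (hfYpos : ∀ x, 0 < fY x) (hfYc : Continuous fY)
    (hQ : Q = volume.withDensity (fun x => ENNReal.ofReal (fY x)))
    (FY : ℝ → ℝ) (hFY : ∀ x, FY x = (Q (Iic x)).toReal) :
    Measure.map (fun x => min (FY x) (1 - FY x)) Q
      = (2 : ℝ≥0∞) • volume.restrict (Icc (0 : ℝ) (1 / 2)) := by
  have hQAC : Q ≪ volume := by rw [hQ]; exact withDensity_absolutelyContinuous _ _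
  -- Ioc values
  have hQIoc : ∀ a b : ℝ, a ≤ b → (Q (Ioc a b)).toReal = ∫ t in a..b, fY t := by
    intro a b hab
    rw [intervalIntegral.integral_of_le hab]
    have h1 : Q (Ioc a b) = ∫⁻ x in Ioc a b, ENNReal.ofReal (fY x) := by
      rw [hQ, withDensity_apply _ measurableSet_Ioc]
    rw [h1, ← integral_eq_lintegral_of_nonneg_ae
      (Filter.Eventually.of_forall fun x => (hfYpos x).le)
      hfYc.aestronglyMeasurable.restrict]
  have hsplit : ∀ a b : ℝ, a ≤ b → FY b = FY a + ∫ t in a..b, fY t := by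
    intro a b hab
    have hu : Q (Iic b) = Q (Iic a) + Q (Ioc a b) := by
      rw [← Iic_union_Ioc_eq_Iic hab, measure_union (Iic_disjoint_Ioc le_rfl) measurableSet_Ioc]
    rw [hFY, hFY, ← hQIoc a b hab, hu,
      ENNReal.toReal_add (measure_ne_top _ _) (measure_ne_top _ _)]
  have hcont : Continuous FY := by
    have hrep : FY = fun x => FY 0 + ∫ t in (0:ℝ)..x, fY t := by
      funext x
      rcases le_total 0 x with h | h
      · exact hsplit 0 x h
      · have h1 := hsplit x 0 h
        have h2 : ∫ t in (0:ℝ)..x, fY t = -∫ t in x..(0:ℝ), fY t :=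
          intervalIntegral.integral_symm x 0
        linarith
    rw [hrep]
    exact continuous_const.add
      (intervalIntegral.continuous_primitive (fun a b => hfYc.intervalIntegrable a b) 0)
  have hsm : StrictMono FY := by
    intro a b hab
    have h1 := hsplit a b hab.le
    have h2 : 0 < ∫ t in a..b, fY t :=
      intervalIntegral.intervalIntegral_pos_of_pos (hfYc.intervalIntegrable a b) hfYpos hab
    linarith
  have hFY0 : ∀ x, 0 < FY x := by
    intro x
    have h1 : FY (x - 1) < FY x := hsm (by linarith)
    have h2 : 0 ≤ FY (x - 1) := by rw [hFY]; exact ENNReal.toReal_nonneg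
    linarith
  have hFY1 : ∀ x, FY x < 1 := by
    intro x
    have h1 : FY x < FY (x + 1) := hsm (by linarith)
    have h2 : FY (x + 1) ≤ 1 := by
      rw [hFY]
      have := ENNReal.toReal_mono (measure_ne_top Q univ) (measure_mono (subset_univ (Iic (x+1))))
      simpa using this
    linarith
  -- existence of small and large values
  have hex_lt : ∀ t : ℝ, 0 < t → ∃ a, FY a < t := by
    intro t ht
    have h1 : Filter.Tendsto (fun x : ℝ => Q (Ici x)) Filter.atBot (nhds (Q univ)) :=
      tendsto_measure_Ici_atBot Q
    have h2 : Filter.Tendsto (fun x : ℝ => (Q (Ici x)).toReal) Filter.atBot (nhds 1) := by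
      have := (ENNReal.tendsto_toReal (measure_ne_top Q univ)).comp h1
      simpa [Function.comp_def] using this
    have h3 : ∀ᶠ x in Filter.atBot, 1 - t < (Q (Ici x)).toReal :=
      h2.eventually (eventually_gt_nhds (by linarith))
    obtain ⟨a, ha⟩ := h3.exists
    refine ⟨a - 1, ?_⟩
    have hdisj : Disjoint (Iic (a - 1)) (Ici a) :=
      (Iic_disjoint_Ioi le_rfl).mono_right (Ici_subset_Ioi.mpr (by linarith))
    have hsum : Q (Iic (a - 1)) + Q (Ici a) ≤ 1 := by
      rw [← measure_union hdisj measurableSet_Ici]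
      exact le_of_le_of_eq (measure_mono (subset_univ _)) measure_univ
    have hsum' : (Q (Iic (a - 1))).toReal + (Q (Ici a)).toReal ≤ 1 := by
      rw [← ENNReal.toReal_add (measure_ne_top _ _) (measure_ne_top _ _)]
      have := ENNReal.toReal_mono (by simp : (1 : ℝ≥0∞) ≠ ⊤) hsum
      simpa using this
    rw [hFY]; linarith
  have hex_gt : ∀ t : ℝ, t < 1 → ∃ b, t < FY b := by
    intro t ht
    have h1 := tendsto_measure_Iic_atTop (μ := Q)
    have h2 : Filter.Tendsto FY Filter.atTop (nhds 1) := by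
      have h3 := (ENNReal.tendsto_toReal (measure_ne_top Q univ)).comp h1
      have h4 : ENNReal.toReal ∘ (fun x : ℝ => Q (Iic x)) = FY := by
        funext x; simp [Function.comp, hFY]
      rw [h4] at h3
      simpa using h3
    exact (h2.eventually (eventually_gt_nhds ht)).exists
  have hsurj : ∀ t : ℝ, 0 < t → t < 1 → ∃ a, FY a = t := by
    intro t h0 h1
    obtain ⟨a, ha⟩ := hex_lt t h0
    obtain ⟨b, hb⟩ := hex_gt t h1
    have hab : a ≤ b := le_of_lt (hsm.lt_iff_lt.mp (by linarith))
    obtain ⟨c, _, hc⟩ := intermediate_value_Icc hab hcont.continuousOn ⟨ha.le, hb.le⟩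
    exact ⟨c, hc⟩
  have hIic : ∀ x, Q (Iic x) = ENNReal.ofReal (FY x) := by
    intro x; rw [hFY, ENNReal.ofReal_toReal (measure_ne_top _ _)]
  have hIio : ∀ x, Q (Iio x) = Q (Iic x) := by
    intro x
    have h1 : Q {x} = 0 := hQAC Real.volume_singleton
    have h2 := measure_union_le (μ := Q) (Iio x) {x}
    rw [Iio_union_right, h1, add_zero] at h2
    exact le_antisymm (measure_mono Iio_subset_Iic_self) h2
  set T : ℝ → ℝ := fun x => min (FY x) (1 - FY x) with hT_def
  have hTc : Continuous T := hcont.min (continuous_const.sub hcont)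
  have hTm : Measurable T := hTc.measurable
  have : IsProbabilityMeasure (Measure.map T Q) := Measure.isProbabilityMeasure_map hTm.aemeasurable
  refine Measure.ext_of_Iic _ _ (fun t => ?_)
  rw [Measure.map_apply hTm measurableSet_Iic]
  rw [Measure.smul_apply, Measure.restrict_apply measurableSet_Iic]
  rcases le_or_gt t 0 with ht0 | ht0
  · have hpre : T ⁻¹' (Iic t) = ∅ := by
      ext x
      simp only [mem_preimage, mem_Iic, mem_empty_iff_false, iff_false, not_le]
      have h0 : 0 < T x := lt_min (hFY0 x) (by linarith [hFY1 x])
      linarith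
    rw [hpre, measure_empty]
    have hsub : Iic t ∩ Icc (0 : ℝ) (1 / 2) ⊆ {0} := by
      rintro x ⟨hx1, hx2, _⟩
      exact le_antisymm (hx1.trans ht0) hx2
    have hnull : volume (Iic t ∩ Icc (0 : ℝ) (1 / 2)) = 0 :=
      measure_mono_null hsub (by simp)
    rw [hnull, smul_zero]
  · rcases le_or_gt (1 / 2 : ℝ) t with ht2 | ht2
    · have hpre : T ⁻¹' (Iic t) = univ := by
        ext x
        simp only [mem_preimage, mem_Iic, mem_univ, iff_true]
        rcases le_total (FY x) (1 / 2) with h | h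
        · exact le_trans (min_le_left _ _) (h.trans ht2)
        · exact le_trans (min_le_right _ _) (by linarith)
      rw [hpre, measure_univ]
      have hIcc : Iic t ∩ Icc (0 : ℝ) (1 / 2) = Icc (0 : ℝ) (1 / 2) :=
        inter_eq_right.mpr fun x hx => le_trans hx.2 ht2
      rw [hIcc, Real.volume_Icc, smul_eq_mul]
      rw [(by norm_num : (2 : ℝ≥0∞) = ENNReal.ofReal 2), ← ENNReal.ofReal_mul (by norm_num)]
      norm_num
    · obtain ⟨a, ha⟩ := hsurj t ht0 (by linarith)
      obtain ⟨b, hb⟩ := hsurj (1 - t) (by linarith) (by linarith)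
      have hab : a < b := hsm.lt_iff_lt.mp (by rw [ha, hb]; linarith)
      have hpre : T ⁻¹' (Iic t) = Iic a ∪ Ici b := by
        ext x
        simp only [mem_preimage, mem_Iic, mem_union, mem_Ici]
        constructor
        · intro hx
          rcases min_le_iff.mp hx with h | h
          · left; exact hsm.le_iff_le.mp (by rw [ha]; exact h)
          · right; exact hsm.le_iff_le.mp (by rw [hb]; linarith)
        · rintro (h | h)
          · refine le_trans (min_le_left _ _) ?_
            have := hsm.monotone h
            rw [ha] at this; linarith
          · refine le_trans (min_le_right _ _) ?_
            have := hsm.monotone h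
            rw [hb] at this; linarith
      rw [hpre]
      have hdisj : Disjoint (Iic a) (Ici b) :=
        (Iic_disjoint_Ioi le_rfl).mono_right (Ici_subset_Ioi.mpr hab)
      rw [measure_union hdisj measurableSet_Ici]
      have h1 : Q (Iic a) = ENNReal.ofReal t := by rw [hIic, ha]
      have h2 : Q (Ici b) = ENNReal.ofReal t := by
        have hcompl : Q (Ici b) = 1 - Q (Iio b) := by
          rw [← compl_Iio, measure_compl measurableSet_Iio (measure_ne_top _ _), measure_univ]
        rw [hcompl, hIio, hIic, hb]
        rw [(by simp : (1 : ℝ≥0∞) = ENNReal.ofReal 1), ← ENNReal.ofReal_sub 1 (by linarith)]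
        norm_num
      rw [h1, h2]
      have hIcc : Iic t ∩ Icc (0 : ℝ) (1 / 2) = Icc 0 t := by
        ext x
        simp only [mem_inter_iff, mem_Iic, mem_Icc]
        constructor
        · rintro ⟨h1, h2, h3⟩; exact ⟨h2, h1⟩
        · rintro ⟨h1, h2⟩; exact ⟨h2, h1, by linarith⟩
      rw [hIcc, Real.volume_Icc, smul_eq_mul, sub_zero]
      rw [(by norm_num : (2 : ℝ≥0∞) = ENNReal.ofReal 2), ← ENNReal.ofReal_mul (by norm_num),
        ← ENNReal.ofReal_add ht0.le ht0.le]
      congr 1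
      ring

lemma key_le (P Q : Measure ℝ) [IsProbabilityMeasure P] [IsProbabilityMeasure Q]
    (fX fY : ℝ → ℝ) (hfYpos : ∀ x, 0 < fY x) (hfYc : Continuous fY)
    (hP : P = volume.withDensity (fun x => ENNReal.ofReal (fX x)))
    (hQ : Q = volume.withDensity (fun x => ENNReal.ofReal (fY x)))
    (FY : ℝ → ℝ) (hFY : ∀ x, FY x = (Q (Iic x)).toReal) :
    TVD (Measure.map (fun x => min (FY x) (1 - FY x)) P)
        ((2 : ℝ≥0∞) • volume.restrict (Icc (0 : ℝ) (1 / 2))) ≤ TVD P Q := by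
  have hPAC : P ≪ volume := by rw [hP]; exact withDensity_absolutelyContinuous _ _
  have hQAC : Q ≪ volume := by rw [hQ]; exact withDensity_absolutelyContinuous _ _
  have hmono : Monotone FY := by
    intro a b hab
    rw [hFY, hFY]
    exact ENNReal.toReal_mono (measure_ne_top _ _) (measure_mono (Iic_subset_Iic.mpr hab))
  have hFYm : Measurable FY := hmono.measurable
  set T : ℝ → ℝ := fun x => min (FY x) (1 - FY x) with hT_def
  have hTm : Measurable T := hFYm.min (measurable_const.sub hFYm)
  have hmap := map_min_cdf Q fY hfYpos hfYc hQ FY hFY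
  have hinst1 : IsProbabilityMeasure (Measure.map T P) :=
    Measure.isProbabilityMeasure_map hTm.aemeasurable
  have hinst2 : IsProbabilityMeasure ((2 : ℝ≥0∞) • volume.restrict (Icc (0 : ℝ) (1 / 2))) := by
    rw [← hmap]
    exact Measure.isProbabilityMeasure_map hTm.aemeasurable
  have hβAC : ((2 : ℝ≥0∞) • volume.restrict (Icc (0 : ℝ) (1 / 2))) ≪ volume := by
    refine Measure.AbsolutelyContinuous.mk fun s hs h0 => ?_
    rw [Measure.smul_apply, Measure.restrict_apply hs,
      measure_mono_null inter_subset_left h0, smul_zero]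
  refine TVD_le_of_forall _ _ hβAC fun E hE => ?_
  rw [Measure.map_apply hTm hE, ← hmap, Measure.map_apply hTm hE]
  exact measure_apply_diff_le P Q hPAC hQAC _


/-- Let `P, Q` have everywhere positive continuous densities `fX, fY` and CDFs `FX, FY`.
With `Q_P^{HD}` the law of `min (FY X) (1 - FY X)` for `X ~ P`, `P_Q^{HD}` the law of
`min (FX Y) (1 - FX Y)` for `Y ~ Q`, and `U` the uniform distribution on `[0, 1/2]`,
we have `TVD(Q_P^{HD}, U) ≤ TVD(P, Q)` and `TVD(P_Q^{HD}, U) ≤ TVD(P, Q)`. -/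
theorem hd_induced_tvd_le
    (P Q : Measure ℝ) [IsProbabilityMeasure P] [IsProbabilityMeasure Q]
    (fX fY : ℝ → ℝ) (hfXpos : ∀ x, 0 < fX x) (hfYpos : ∀ x, 0 < fY x)
    (hfXc : Continuous fX) (hfYc : Continuous fY)
    (hP : P = volume.withDensity (fun x => ENNReal.ofReal (fX x)))
    (hQ : Q = volume.withDensity (fun x => ENNReal.ofReal (fY x)))
    (FX FY : ℝ → ℝ)
    (hFX : ∀ x, FX x = (P (Iic x)).toReal)
    (hFY : ∀ x, FY x = (Q (Iic x)).toReal) :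
    TVD (Measure.map (fun x => min (FY x) (1 - FY x)) P)
        ((2 : ℝ≥0∞) • volume.restrict (Icc (0 : ℝ) (1 / 2))) ≤ TVD P Q ∧
    TVD (Measure.map (fun y => min (FX y) (1 - FX y)) Q)
        ((2 : ℝ≥0∞) • volume.restrict (Icc (0 : ℝ) (1 / 2))) ≤ TVD P Q := by
  constructor
  · exact key_le P Q fX fY hfYpos hfYc hP hQ FY hFY
  · have h := key_le Q P fY fX hfXpos hfXc hQ hP FX hFX
    rwa [TVD_symm Q P] at h
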